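/- Let α ∈ (0,1], C ⊆ {1,…,n}, and let ũ^{k+1}, ũ^k ∈ ℝ^n, ṽ^k, ε̃^k ∈ ℝ^m satisfy: ũ^{k+1} ∈ prox_{αγ‖·‖₀}((1−α)ũ^k + αDṽ^k), supp(ũ^{k+1}) = C, and ṽ^k = S(Dᵀũ^k) + ε̃^k. Then ũ^{k+1} = 𝒯(ũ^k) + α T_C D ε̃^k, where 𝒯(u) := (1−α)T_C u + α T_C D S(Dᵀu). -/

import Mathlib

open Matrix

noncomputable section

/-- Matrix–vector multiplication as a map between Euclidean spaces. -/
def mulVecE {n m : ℕ} (A : Matrix (Fin n) (Fin m) ℝ) (v : EuclideanSpace ℝ (Fin m)) :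
    EuclideanSpace ℝ (Fin n) :=
  (EuclideanSpace.equiv (Fin n) ℝ).symm (A.mulVec ((EuclideanSpace.equiv (Fin m) ℝ) v))

/-- The `ℓ₀` "norm": the number of nonzero components, as a real number. -/
def l0 {n : ℕ} (u : EuclideanSpace ℝ (Fin n)) : ℝ := ({i : Fin n | u i ≠ 0}).ncard

/-- The support of a vector. -/
def supp {n : ℕ} (u : EuclideanSpace ℝ (Fin n)) : Set (Fin n) := {i | u i ≠ 0}

/-- Membership `x ∈ prox_{t‖·‖₀}(y)`. -/
def InProxL0 {n : ℕ} (t : ℝ) (x y : EuclideanSpace ℝ (Fin n)) : Prop :=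
  ∀ z : EuclideanSpace ℝ (Fin n),
    (1 / (2 * t)) * ‖x - y‖ ^ 2 + l0 x ≤ (1 / (2 * t)) * ‖z - y‖ ^ 2 + l0 z

/-- The coordinate projection `T_C` onto an index set `C`. -/
def Tmat {n : ℕ} (C : Set (Fin n)) (u : EuclideanSpace ℝ (Fin n)) :
    EuclideanSpace ℝ (Fin n) :=
  (EuclideanSpace.equiv (Fin n) ℝ).symm (C.indicator (fun i => u i))

private lemma normsq_aux {n : ℕ} (x : EuclideanSpace ℝ (Fin n)) :
    ‖x‖ ^ 2 = ∑ i, (x i) ^ 2 := by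
  rw [EuclideanSpace.norm_eq, Real.sq_sqrt (Finset.sum_nonneg fun i _ => sq_nonneg _)]
  simp [sq_abs]

private lemma prox_agree {n : ℕ} (t : ℝ) (ht : 0 < t) (x y : EuclideanSpace ℝ (Fin n))
    (h : InProxL0 t x y) (i : Fin n) (hi : x i ≠ 0) : x i = y i := by
  set z : EuclideanSpace ℝ (Fin n) := WithLp.toLp 2 (Function.update x i (y i)) with hzdef
  have hzi : z i = y i := Function.update_self i (y i) x
  have hzj : ∀ j, j ≠ i → z j = x j := fun j hj => Function.update_of_ne hj _ _
  have hl0 : l0 z ≤ l0 x := by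
    unfold l0
    have hsub : {j : Fin n | z j ≠ 0} ⊆ {j : Fin n | x j ≠ 0} := by
      intro j hj
      by_cases hji : j = i
      · subst hji; exact hi
      · simpa [hzj j hji] using hj
    exact_mod_cast Set.ncard_le_ncard hsub (Set.toFinite _)
  have key : ∑ j, (z j - y j) ^ 2 = (∑ j, (x j - y j) ^ 2) - (x i - y i) ^ 2 := by
    rw [← Finset.sum_erase_add _ _ (Finset.mem_univ i),
        ← Finset.sum_erase_add Finset.univ (fun j => (x j - y j) ^ 2) (Finset.mem_univ i)]
    have : ∑ j ∈ Finset.univ.erase i, (z j - y j) ^ 2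
        = ∑ j ∈ Finset.univ.erase i, (x j - y j) ^ 2 := by
      apply Finset.sum_congr rfl
      intro j hj
      rw [hzj j (Finset.ne_of_mem_erase hj)]
    rw [this, hzi]
    ring
  have h2 := h z
  rw [normsq_aux, normsq_aux] at h2
  have hxy : ∀ j, ((x - y) j) = x j - y j := fun j => rfl
  have hzy : ∀ j, ((z - y) j) = z j - y j := fun j => rfl
  simp only [hxy, hzy] at h2
  rw [key] at h2
  have hpos : 0 < 1 / (2 * t) := by positivity
  have : (x i - y i) ^ 2 ≤ 0 := by nlinarith
  nlinarith [sq_nonneg (x i - y i)]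

/-- If `ũ^{k+1} ∈ prox_{αγ‖·‖₀}((1−α)ũ^k + αDṽ^k)`,
`supp(ũ^{k+1}) = C`, and `ṽ^k = S(Dᵀũ^k) + ε̃^k`, then
`ũ^{k+1} = 𝒯(ũ^k) + α T_C D ε̃^k`, where `𝒯(u) = (1−α)T_C u + α T_C D S(Dᵀu)`. -/
theorem stmt14 (n m p : ℕ) (ψ : EuclideanSpace ℝ (Fin p) → ℝ)
    (hconv : ConvexOn ℝ Set.univ ψ) (hdiff : ContDiff ℝ 1 ψ)
    (hbdd : BddBelow (Set.range ψ))
    (B : Matrix (Fin p) (Fin m) ℝ) (D : Matrix (Fin n) (Fin m) ℝ) (hD : Dᵀ * D = 1)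
    (lam γ : ℝ) (hlam : 0 < lam) (hγ : 0 < γ)
    (S : EuclideanSpace ℝ (Fin m) → EuclideanSpace ℝ (Fin m))
    (hS : ∀ x v, ψ (mulVecE B (S x)) + (lam / (2 * γ)) * ‖S x - x‖ ^ 2 ≤
      ψ (mulVecE B v) + (lam / (2 * γ)) * ‖v - x‖ ^ 2)
    (α : ℝ) (hα0 : 0 < α) (hα1 : α ≤ 1)
    (C : Set (Fin n)) (uk1 uk : EuclideanSpace ℝ (Fin n))
    (vk ε : EuclideanSpace ℝ (Fin m))
    (hprox : InProxL0 (α * γ) uk1 ((1 - α) • uk + α • mulVecE D vk))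
    (hsupp : supp uk1 = C)
    (hv : vk = S (mulVecE Dᵀ uk) + ε) :
    uk1 = ((1 - α) • Tmat C uk + α • Tmat C (mulVecE D (S (mulVecE Dᵀ uk)))) +
      α • Tmat C (mulVecE D ε) := by
  have ht : 0 < α * γ := mul_pos hα0 hγ
  set y : EuclideanSpace ℝ (Fin n) := (1 - α) • uk + α • mulVecE D vk with hy
  ext i
  by_cases hiC : i ∈ C
  · have hi : uk1 i ≠ 0 := by rw [← hsupp] at hiC; exact hiC
    have h1 : uk1 i = y i := prox_agree (α * γ) ht uk1 y hprox i hi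
    have hyi : y i = (1 - α) * uk i + α * (D.mulVec vk) i := rfl
    have hvk : D.mulVec vk i
        = D.mulVec (S (mulVecE Dᵀ uk)) i + D.mulVec ε i := by
      have : (vk : Fin m → ℝ) = (S (mulVecE Dᵀ uk) : Fin m → ℝ) + (ε : Fin m → ℝ) := by
        funext j; rw [hv]; rfl
      rw [show D.mulVec vk = D.mulVec ((S (mulVecE Dᵀ uk) : Fin m → ℝ) + ε) by rw [← this],
        Matrix.mulVec_add]
      rfl
    have hrhs : (((1 - α) • Tmat C uk + α • Tmat C (mulVecE D (S (mulVecE Dᵀ uk)))) +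
        α • Tmat C (mulVecE D ε)) i
        = (1 - α) * (C.indicator (fun j => uk j) i)
          + α * (C.indicator (fun j => D.mulVec (S (mulVecE Dᵀ uk)) j) i)
          + α * (C.indicator (fun j => D.mulVec ε j) i) := rfl
    rw [h1, hyi, hvk, hrhs, Set.indicator_of_mem hiC, Set.indicator_of_mem hiC,
      Set.indicator_of_mem hiC]
    ring
  · have hi : uk1 i = 0 := by
      by_contra hne
      exact hiC (hsupp ▸ hne)
    have hrhs : (((1 - α) • Tmat C uk + α • Tmat C (mulVecE D (S (mulVecE Dᵀ uk)))) +
        α • Tmat C (mulVecE D ε)) i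
        = (1 - α) * (C.indicator (fun j => uk j) i)
          + α * (C.indicator (fun j => D.mulVec (S (mulVecE Dᵀ uk)) j) i)
          + α * (C.indicator (fun j => D.mulVec ε j) i) := rfl
    rw [hi, hrhs, Set.indicator_of_notMem hiC, Set.indicator_of_notMem hiC,
      Set.indicator_of_notMem hiC]
    ring

end
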